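/- arXiv:1205.0778 — 3 statements merged into one kernel-verified Lean document; each statement's English description precedes it below -/
import Mathlib

section
/- Let L be a Lie algebra over a field F and let N be a nilpotent ideal of L. Denote by A the associative subalgebra of End_F(L) generated by ad(L), where ad: L → gl(L) is the adjoint representation, (ad a)(b) = [a,b]. Then ad(N) ⊆ J(A), the Jacobson radical of A. -/
noncomputable section

open LieModule

/-- The pushed lower central series `N.lcs L (k+1)` of an ideal `N` is contained in the image
of the `k`-th term of the lower central series of `N` as a Lie algebra. -/
lemma lcs_le_map_lcs (F L : Type*) [Field F] [LieRing L] [LieAlgebra F L]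
    (N : LieIdeal F L) (k : ℕ) :
    LieSubmodule.toSubmodule (N.lcs L (k + 1)) ≤
      (LieSubmodule.toSubmodule (lowerCentralSeries F N N k)).map
        (LieSubmodule.toSubmodule N).subtype := by
  induction k with
  | zero =>
    simp only [LieIdeal.lcs_succ, LieIdeal.lcs_zero, LieModule.lowerCentralSeries_zero,
      LieSubmodule.top_toSubmodule, Submodule.map_top]
    rw [Submodule.range_subtype]
    exact (LieSubmodule.toSubmodule_le_toSubmodule _ _).mpr (LieSubmodule.lie_le_left N ⊤)
  | succ k ih =>
    rw [LieIdeal.lcs_succ, LieSubmodule.lieIdeal_oper_eq_linear_span', Submodule.span_le]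
    rintro m ⟨x, hx, m', hm', rfl⟩
    obtain ⟨m₀, hm₀, rfl⟩ := ih hm'
    refine ⟨⁅(⟨x, hx⟩ : N), m₀⁆, ?_, rfl⟩
    simp only [SetLike.mem_coe, LieSubmodule.mem_toSubmodule] at hm₀ ⊢
    rw [LieModule.lowerCentralSeries_succ]
    have : (⟨x, hx⟩ : N) ∈ (⊤ : LieIdeal F N) := LieSubmodule.mem_top _
    exact LieSubmodule.lie_mem_lie this hm₀

set_option maxHeartbeats 1000000 in
/-- let `L` be a Lie algebra over a field `F` and `N` a nilpotent ideal of `L`.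
Let `A` be the associative unital subalgebra of `End_F(L)` generated by `ad(L)`.  Then
`ad(N) ⊆ J(A)`, the Jacobson radical of `A`. -/
theorem ad_nilpotent_ideal_mem_jacobson
    (F L : Type*) [Field F] [LieRing L] [LieAlgebra F L]
    (N : LieIdeal F L) (hN : LieRing.IsNilpotent N)
    (A : Subalgebra F (Module.End F L))
    (hA : A = Algebra.adjoin F (Set.range fun a : L => (LieAlgebra.ad F L a : Module.End F L)))
    (n : L) (hn : n ∈ N)
    (hmem : (LieAlgebra.ad F L n : Module.End F L) ∈ A) :
    (⟨LieAlgebra.ad F L n, hmem⟩ : A) ∈ (⊥ : Ideal A).jacobson := by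
  -- the chain of Lie ideals `C k = [N, [N, …, [N, L]]]`
  set C : ℕ → LieSubmodule F L L := fun k => N.lcs L k with hC
  -- it eventually vanishes, since `N` is nilpotent
  obtain ⟨k, hk⟩ := (LieModule.isNilpotent_iff F N N).mp hN
  have hbot : C (k + 1) = ⊥ := by
    show N.lcs L (k + 1) = ⊥
    rw [← LieSubmodule.toSubmodule_inj]
    apply le_bot_iff.mp
    refine le_trans (lcs_le_map_lcs F L N k) ?_
    rw [hk]
    simp
  -- every element of `A` preserves each `C j`
  have hpres : ∀ e : Module.End F L, e ∈ A → ∀ j, ∀ m ∈ C j, e m ∈ C j := by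
    intro e he j
    rw [hA] at he
    induction he using Algebra.adjoin_induction with
    | mem x hx =>
      obtain ⟨a, rfl⟩ := hx
      intro m hm
      exact (C j).lie_mem hm
    | algebraMap r =>
      intro m hm
      simpa [Module.algebraMap_end_apply] using (C j).smul_mem r hm
    | add x y hx hy ihx ihy =>
      intro m hm
      exact (C j).add_mem (ihx m hm) (ihy m hm)
    | mul x y hx hy ihx ihy =>
      intro m hm
      exact ihx _ (ihy m hm)
  -- `ad n` maps `C j` into `C (j+1)`
  have hstep : ∀ j, ∀ m ∈ C j, LieAlgebra.ad F L n m ∈ C (j + 1) := by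
    intro j m hm
    show LieAlgebra.ad F L n m ∈ N.lcs L (j + 1)
    rw [LieIdeal.lcs_succ]
    exact LieSubmodule.lie_mem_lie hn hm
  rw [Ideal.mem_jacobson_iff]
  intro y
  -- `y * ad n` is nilpotent in `A`
  have hnil : IsNilpotent (y * (⟨LieAlgebra.ad F L n, hmem⟩ : A)) := by
    refine ⟨k + 1, ?_⟩
    have key : ∀ j, ∀ v : L, (((y : Module.End F L) * LieAlgebra.ad F L n) ^ j) v ∈ C j := by
      intro j
      induction j with
      | zero => intro v; simp [hC]
      | succ j ih =>
        intro v
        rw [pow_succ']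
        have h1 := hstep j _ (ih v)
        have h2 := hpres (y : Module.End F L) y.2 (j + 1) _ h1
        simpa [Module.End.mul_apply] using h2
    have hz : ((y : Module.End F L) * LieAlgebra.ad F L n) ^ (k + 1) = 0 := by
      ext v
      have := key (k + 1) v
      rw [hbot] at this
      simpa using this
    have : (((y * (⟨LieAlgebra.ad F L n, hmem⟩ : A)) ^ (k + 1) : A) : Module.End F L) = 0 := by
      push_cast
      exact hz
    exact Subtype.ext (by simpa using this)
  -- hence `y * ad n + 1` is a unit, giving a two-sided inverse
  obtain ⟨u, hu⟩ := hnil.isUnit_add_one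
  refine ⟨(↑u⁻¹ : A), ?_⟩
  rw [Ideal.mem_bot]
  set X : A := (⟨LieAlgebra.ad F L n, hmem⟩ : A) with hX
  set z : A := (↑u⁻¹ : A) with hz
  have h1 : z * (y * X + 1) = 1 := by rw [hz, hX, ← hu]; exact u.inv_mul
  have h2 : z * y * X + z - 1 = z * (y * X + 1) - 1 := by rw [mul_add, mul_one, mul_assoc]
  rw [h2, h1, sub_self]
end
end

section
/- Let H be a Hopf algebra over a field F, let L be an H-comodule Lie algebra, and let (V, ψ) be a symmetric (H,L)-module. Then the Chevalley–Eilenberg coboundary ∂ω of any H-colinear 1-cochain ω: L → V is an H-colinear 2-cochain, i.e., ∂(C̃¹(L;V)) ⊆ C̃²(L;V). -/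
open TensorProduct

noncomputable section

attribute [local instance 100] LieRing.ofAssociativeRing

/-- The bracket of a Lie algebra as a linear map on the tensor square. -/
def bracketHom (F L : Type*) [Field F] [LieRing L] [LieAlgebra F L] : L ⊗[F] L →ₗ[F] L :=
  TensorProduct.lift (LieAlgebra.ad F L).toLinearMap

/-- A right `H`-comodule structure on an `F`-vector space `V`. -/
structure HComodule (F H V : Type*) [Field F] [Ring H] [HopfAlgebra F H]
    [AddCommGroup V] [Module F V] where
  ρ : V →ₗ[F] V ⊗[F] H
  coassoc : ∀ x : V, (TensorProduct.assoc F V H H) ((ρ.rTensor H) (ρ x))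
      = ((Coalgebra.comul (R := F) (A := H)).lTensor V) (ρ x)
  counit : ∀ x : V,
    (TensorProduct.rid F V) (((Coalgebra.counit (R := F) (A := H)).lTensor V) (ρ x)) = x

/-- An `H`-comodule Lie algebra: a Lie algebra and right `H`-comodule `L` such that
`ρ⁅a,b⁆ = ⁅a₍₀₎,b₍₀₎⁆ ⊗ a₍₁₎b₍₁₎` (Sweedler notation). -/
structure HComoduleLieAlgebra (F H L : Type*) [Field F] [Ring H] [HopfAlgebra F H]
    [LieRing L] [LieAlgebra F L] extends HComodule F H L where
  compat : ∀ a b : L, ρ ⁅a, b⁆ =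
    (TensorProduct.map (bracketHom F L) (LinearMap.mul' F H))
      ((TensorProduct.tensorTensorTensorComm F L H L H) (ρ a ⊗ₜ[F] ρ b))

/-- A subspace `W` is an `H`-subcomodule if `ρ(W) ⊆ W ⊗ H`. -/
def HComodule.IsHSubcomodule {F H V : Type*} [Field F] [Ring H] [HopfAlgebra F H]
    [AddCommGroup V] [Module F V] (C : HComodule F H V) (W : Submodule F V) : Prop :=
  ∀ x ∈ W, C.ρ x ∈ LinearMap.range (W.subtype.rTensor H)

/-- `t ∈ H*` is a left integral on `H`: `t(a₍₂₎)a₍₁₎ = t(a)1`. -/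
def IsLeftIntegral (F H : Type*) [Field F] [Ring H] [HopfAlgebra F H]
    (t : H →ₗ[F] F) : Prop :=
  ∀ a : H, (TensorProduct.rid F H) ((t.lTensor H) (Coalgebra.comul (R := F) a)) = t a • (1 : H)

/-- `t ∈ H*` is ad-invariant: `t(a₍₁₎ b S(a₍₂₎)) = ε(a) t(b)`. -/
def IsAdInvariant (F H : Type*) [Field F] [Ring H] [HopfAlgebra F H]
    (t : H →ₗ[F] F) : Prop :=
  ∀ a b : H,
    t ((LinearMap.mul' F H)
        ((TensorProduct.map (LinearMap.mulRight F b) (HopfAlgebra.antipode (R := F)))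
          (Coalgebra.comul (R := F) a)))
      = Coalgebra.counit (R := F) a * t b

/-- An `(H,L)`-module over an `H`-comodule Lie algebra `L`: a representation
`ψ : L → gl(V)` on a right `H`-comodule `V` with `ρ_V(ψ(a)v) = ψ(a₍₀₎)v₍₀₎ ⊗ a₍₁₎v₍₁₎`. -/
structure HLModule (F H L V : Type*) [Field F] [Ring H] [HopfAlgebra F H]
    [LieRing L] [LieAlgebra F L] [AddCommGroup V] [Module F V]
    (C : HComoduleLieAlgebra F H L) extends HComodule F H V where
  ψ : L →ₗ⁅F⁆ Module.End F V
  compat : ∀ (a : L) (v : V),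
    ρ (ψ a v) =
      (TensorProduct.map (TensorProduct.lift ψ.toLinearMap) (LinearMap.mul' F H))
        ((TensorProduct.tensorTensorTensorComm F L H V H) (C.ρ a ⊗ₜ[F] ρ v))

/-- A symmetric `(H,L)`-module: additionally
`ψ(a₍₀₎)v₍₀₎ ⊗ a₍₁₎v₍₁₎ = ψ(a₍₀₎)v₍₀₎ ⊗ v₍₁₎a₍₁₎`. -/
def HLModule.IsSymmetric {F H L V : Type*} [Field F] [Ring H] [HopfAlgebra F H]
    [LieRing L] [LieAlgebra F L] [AddCommGroup V] [Module F V]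
    {C : HComoduleLieAlgebra F H L} (M : HLModule F H L V C) : Prop :=
  ∀ (a : L) (v : V),
    (TensorProduct.map (TensorProduct.lift M.ψ.toLinearMap) (LinearMap.mul' F H))
        ((TensorProduct.tensorTensorTensorComm F L H V H) (C.ρ a ⊗ₜ[F] M.ρ v)) =
      (TensorProduct.map (TensorProduct.lift M.ψ.toLinearMap)
          ((LinearMap.mul' F H) ∘ₗ (TensorProduct.comm F H H).toLinearMap))
        ((TensorProduct.tensorTensorTensorComm F L H V H) (C.ρ a ⊗ₜ[F] M.ρ v))

/-- A linear map `φ : V → W` of right `H`-comodules is `H`-colinear; for `φ : L → V` this is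
exactly the condition of being an `H`-colinear `1`-cochain. -/
def IsColinear {F H V W : Type*} [Field F] [Ring H] [HopfAlgebra F H]
    [AddCommGroup V] [Module F V] [AddCommGroup W] [Module F W]
    (CV : HComodule F H V) (CW : HComodule F H W) (φ : V →ₗ[F] W) : Prop :=
  ∀ v : V, CW.ρ (φ v) = (φ.rTensor H) (CV.ρ v)

/-- An `H`-colinear (alternating) `2`-cochain on `L` with values in `V`:
`ρ_V(d(a,b)) = d(a₍₀₎, b₍₀₎) ⊗ a₍₁₎b₍₁₎`. -/
def IsColinearTwoCochain {F H L V : Type*} [Field F] [Ring H] [HopfAlgebra F H]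
    [LieRing L] [LieAlgebra F L] [AddCommGroup V] [Module F V]
    (C : HComoduleLieAlgebra F H L) (M : HComodule F H V)
    (d : L →ₗ[F] L →ₗ[F] V) : Prop :=
  (∀ x : L, d x x = 0) ∧
    ∀ a b : L, M.ρ (d a b) =
      (TensorProduct.map (TensorProduct.lift d) (LinearMap.mul' F H))
        ((TensorProduct.tensorTensorTensorComm F L H L H) (C.ρ a ⊗ₜ[F] C.ρ b))

/-- for a symmetric `(H,L)`-module `(V,ψ)`, the Chevalley–Eilenberg coboundary
`(∂ω)(x,y) = ψ(x)ω(y) − ψ(y)ω(x) − ω(⁅x,y⁆)` of any `H`-colinear `1`-cochain `ω : L → V` is an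
`H`-colinear `2`-cochain. -/
theorem coboundary_of_colinear_one_cochain_is_colinear
    (F H L V : Type*) [Field F] [Ring H] [HopfAlgebra F H]
    [LieRing L] [LieAlgebra F L] [AddCommGroup V] [Module F V]
    (C : HComoduleLieAlgebra F H L) (M : HLModule F H L V C) (hM : M.IsSymmetric)
    (ω : L →ₗ[F] V) (hω : IsColinear C.toHComodule M.toHComodule ω)
    (d : L →ₗ[F] L →ₗ[F] V)
    (hd : ∀ x y : L, d x y = M.ψ x (ω y) - M.ψ y (ω x) - ω ⁅x, y⁆) :
    IsColinearTwoCochain C M.toHComodule d := by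
  constructor
  · intro x; rw [hd]; simp
  · intro a b
    rw [hd a b, map_sub, map_sub, M.compat a (ω b), M.compat b (ω a),
      hM b (ω a), hω a, hω b, hω ⁅a, b⁆, C.compat a b]
    generalize C.ρ a = p
    generalize C.ρ b = q
    induction p using TensorProduct.induction_on with
    | zero => simp
    | tmul x h =>
      induction q using TensorProduct.induction_on with
      | zero => simp
      | tmul y k =>
        simp [TensorProduct.tensorTensorTensorComm_tmul, TensorProduct.map_tmul,
          TensorProduct.lift.tmul, LinearMap.rTensor_tmul, LinearMap.mul'_apply,
          TensorProduct.comm_tmul, bracketHom, hd, TensorProduct.sub_tmul]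
      | add q1 q2 h1 h2 =>
        simp only [TensorProduct.add_tmul, TensorProduct.tmul_add, map_add,
          LinearMap.map_add]
        rw [← h1, ← h2]; abel
    | add p1 p2 h1 h2 =>
      simp only [TensorProduct.add_tmul, TensorProduct.tmul_add, map_add,
        LinearMap.map_add]
      rw [← h1, ← h2]; abel
end
end

section
/- Let H be a Hopf algebra over a field F, let L be an H-module Lie algebra, and let M be an H-submodule of L. Then the centralizer N = {a ∈ L : [a,b] = 0 for all b ∈ M} of M in L is an H-submodule of L. -/
open TensorProduct

noncomputable section

attribute [local instance 100] LieRing.ofAssociativeRing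

/-- An `H`-module Lie algebra structure on `L`: a left `H`-module structure (given as an
`F`-algebra map `H →ₐ Module.End F L`) such that `h ⬝ ⁅a,b⁆ = ⁅h₍₁₎ ⬝ a, h₍₂₎ ⬝ b⁆`
(Sweedler notation for the comultiplication of `H`). -/
structure HModuleLieAlgebra (F H L : Type*) [Field F] [Ring H] [HopfAlgebra F H]
    [LieRing L] [LieAlgebra F L] where
  act : H →ₐ[F] Module.End F L
  compat : ∀ (h : H) (a b : L),
    act h ⁅a, b⁆ =
      bracketHom F L
        ((TensorProduct.map (TensorProduct.lift act.toLinearMap)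
            (TensorProduct.lift act.toLinearMap))
          ((TensorProduct.tensorTensorTensorComm F H H L L)
            (Coalgebra.comul (R := F) h ⊗ₜ[F] (a ⊗ₜ[F] b))))

/-- A subspace is an `H`-submodule if it is stable under the `H`-action. -/
def HModuleLieAlgebra.IsHSubmodule {F H L : Type*} [Field F] [Ring H] [HopfAlgebra F H]
    [LieRing L] [LieAlgebra F L] (S : HModuleLieAlgebra F H L) (W : Submodule F L) : Prop :=
  ∀ (h : H), ∀ x ∈ W, S.act h x ∈ W


/-- if `L` is an `H`-module Lie algebra and `M` is an `H`-submodule of `L`, then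
the centralizer `N = {a ∈ L : ⁅a,b⁆ = 0 for all b ∈ M}` of `M` in `L` is an `H`-submodule. -/
theorem centralizer_is_H_submodule
    (F H L : Type*) [Field F] [Ring H] [HopfAlgebra F H]
    [LieRing L] [LieAlgebra F L]
    (S : HModuleLieAlgebra F H L) (M : Submodule F L) (hM : S.IsHSubmodule M)
    (N : Submodule F L) (hN : (N : Set L) = {a : L | ∀ b ∈ M, ⁅a, b⁆ = 0}) :
    S.IsHSubmodule N := by
  classical
  intro h a haN
  have haN' : ∀ b ∈ M, ⁅a, b⁆ = 0 := by
    have : a ∈ (N : Set L) := haN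
    rw [hN] at this
    exact this
  have key : ∀ b ∈ M, ⁅S.act h a, b⁆ = 0 := by
    intro b hb
    set π : H ⊗[F] L →ₗ[F] L := TensorProduct.lift S.act.toLinearMap with hπdef
    -- `compat` rewritten in terms of an arbitrary representation of `comul x`
    have compatRepr : ∀ (x : H) (c : L) (ρ : Coalgebra.Repr F x (H × H)),
        S.act x ⁅a, c⁆ =
          ∑ i ∈ ρ.index, ⁅S.act (ρ.left i) a, S.act (ρ.right i) c⁆ := by
      intro x c ρ
      rw [S.compat x a c, ← ρ.eq]
      simp [bracketHom, TensorProduct.sum_tmul, map_sum,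
        TensorProduct.tensorTensorTensorComm_tmul, TensorProduct.map_tmul,
        TensorProduct.lift.tmul]
    set ρ : Coalgebra.Repr F h (H × H) := Coalgebra.Repr.arbitrary F h with hρdef
    set ρ₁ : (i : H × H) → Coalgebra.Repr F (ρ.left i) (H × H) :=
      fun i => Coalgebra.Repr.arbitrary F (ρ.left i) with hρ₁def
    set ρ₂ : (i : H × H) → Coalgebra.Repr F (ρ.right i) (H × H) :=
      fun i => Coalgebra.Repr.arbitrary F (ρ.right i) with hρ₂def
    -- Step 1 : ⁅h·a, b⁆ = ∑ᵢ ⁅h₁·a, ε(h₂) • b⁆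
    have step1 : ⁅S.act h a, b⁆ =
        ∑ i ∈ ρ.index, ⁅S.act (ρ.left i) a, Coalgebra.counit (R := F) (ρ.right i) • b⁆ := by
      have e := Coalgebra.sum_tmul_counit_eq (R := F) ρ
      set Ψ : H ⊗[F] F →ₗ[F] L :=
        (bracketHom F L) ∘ₗ
          TensorProduct.map (π ∘ₗ (TensorProduct.mk F H L).flip a)
            (LinearMap.toSpanSingleton F L b) with hΨdef
      have e' := congrArg Ψ e
      simp only [map_sum, hΨdef, LinearMap.coe_comp, Function.comp_apply,
        TensorProduct.map_tmul, TensorProduct.mk_apply, LinearMap.flip_apply,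
        LinearMap.toSpanSingleton_apply, hπdef, TensorProduct.lift.tmul,
        AlgHom.toLinearMap_apply, bracketHom, LieHom.coe_toLinearMap,
        LieAlgebra.ad_apply, one_smul] at e'
      exact e'.symm
    -- Step 2 : ε(h₂) • b = ∑ⱼ h₂₁ · ((S h₂₂) · b)
    have step2 : ∀ i ∈ ρ.index,
        Coalgebra.counit (R := F) (ρ.right i) • b =
          ∑ j ∈ (ρ₂ i).index,
            S.act ((ρ₂ i).left j) (S.act (HopfAlgebra.antipode (R := F) ((ρ₂ i).right j)) b) := by
      intro i _
      have e2 := HopfAlgebra.sum_mul_antipode_eq_smul (R := F) (ρ₂ i)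
      calc Coalgebra.counit (R := F) (ρ.right i) • b
          = S.act (Coalgebra.counit (R := F) (ρ.right i) • (1 : H)) b := by
            simp [map_smul, map_one]
        _ = S.act (∑ j ∈ (ρ₂ i).index,
              (ρ₂ i).left j * HopfAlgebra.antipode (R := F) ((ρ₂ i).right j)) b := by
            rw [e2]
        _ = ∑ j ∈ (ρ₂ i).index,
              S.act ((ρ₂ i).left j) (S.act (HopfAlgebra.antipode (R := F) ((ρ₂ i).right j)) b) := by
            rw [map_sum]
            simp [Module.End.mul_apply]
    -- Step 3 : coassociativity transported by a trilinear map
    have step3 :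
        ∑ i ∈ ρ.index, ∑ j ∈ (ρ₂ i).index,
            ⁅S.act (ρ.left i) a,
              S.act ((ρ₂ i).left j) (S.act (HopfAlgebra.antipode (R := F) ((ρ₂ i).right j)) b)⁆ =
        ∑ i ∈ ρ.index, ∑ j ∈ (ρ₁ i).index,
            ⁅S.act ((ρ₁ i).left j) a,
              S.act ((ρ₁ i).right j) (S.act (HopfAlgebra.antipode (R := F) (ρ.right i)) b)⁆ := by
      have e3 := Coalgebra.sum_tmul_tmul_eq (R := F) ρ ρ₁ ρ₂
      set Ξ : H ⊗[F] (H ⊗[F] H) →ₗ[F] L :=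
        (bracketHom F L) ∘ₗ
          TensorProduct.map (π ∘ₗ (TensorProduct.mk F H L).flip a)
            (π ∘ₗ LinearMap.lTensor H
              (π ∘ₗ (TensorProduct.mk F H L).flip b ∘ₗ HopfAlgebra.antipode (R := F))) with hΞdef
      have e3' := congrArg Ξ e3
      simp only [map_sum, hΞdef, LinearMap.coe_comp, Function.comp_apply,
        TensorProduct.map_tmul, TensorProduct.mk_apply, LinearMap.flip_apply,
        LinearMap.lTensor_tmul, hπdef, TensorProduct.lift.tmul,
        AlgHom.toLinearMap_apply, bracketHom, LieAlgebra.ad_apply] at e3'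
      exact e3'.symm
    -- Step 4 : fold back with `compat` and kill each term
    calc ⁅S.act h a, b⁆
        = ∑ i ∈ ρ.index, ⁅S.act (ρ.left i) a,
            Coalgebra.counit (R := F) (ρ.right i) • b⁆ := step1
      _ = ∑ i ∈ ρ.index, ∑ j ∈ (ρ₂ i).index,
            ⁅S.act (ρ.left i) a,
              S.act ((ρ₂ i).left j)
                (S.act (HopfAlgebra.antipode (R := F) ((ρ₂ i).right j)) b)⁆ := by
          refine Finset.sum_congr rfl fun i hi => ?_
          rw [step2 i hi, ← LieAlgebra.ad_apply (R := F), map_sum]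
          simp only [LieAlgebra.ad_apply]
      _ = ∑ i ∈ ρ.index, ∑ j ∈ (ρ₁ i).index,
            ⁅S.act ((ρ₁ i).left j) a,
              S.act ((ρ₁ i).right j)
                (S.act (HopfAlgebra.antipode (R := F) (ρ.right i)) b)⁆ := step3
      _ = ∑ i ∈ ρ.index,
            S.act (ρ.left i) ⁅a, S.act (HopfAlgebra.antipode (R := F) (ρ.right i)) b⁆ := by
          refine Finset.sum_congr rfl fun i _ => ?_
          exact (compatRepr (ρ.left i)
            (S.act (HopfAlgebra.antipode (R := F) (ρ.right i)) b) (ρ₁ i)).symm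
      _ = 0 := by
          refine Finset.sum_eq_zero fun i _ => ?_
          rw [haN' _ (hM _ b hb), map_zero]
  show S.act h a ∈ N
  have : S.act h a ∈ (N : Set L) := by rw [hN]; exact key
  exact this
end
end
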